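/- Let φ be an Orlicz function taking only finite values, satisfying the Δ₂-condition at zero, and such that ∑_{n=n₁}^∞ φ(1/n) < ∞ for some n₁ ∈ ℕ. Then for every ε > 0 there exists δ > 0 such that for all x ∈ ces_φ with ρ_φ(x) ≥ 1 + ε one has ‖x‖_φ ≥ 1 + δ. -/

import Mathlib

open scoped ENNReal
open Filter

/-- An Orlicz function: `φ : ℝ → [0,∞]` even, convex, left continuous on `ℝ₊`,
continuous at zero, with `φ 0 = 0` and `φ u → ∞` as `u → ∞`. -/
structure OrliczFunction where
  toFun : ℝ → ℝ≥0∞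
  even' : ∀ u : ℝ, toFun (-u) = toFun u
  convex' : ∀ u v t : ℝ, 0 ≤ t → t ≤ 1 →
    toFun (t * u + (1 - t) * v) ≤ ENNReal.ofReal t * toFun u + ENNReal.ofReal (1 - t) * toFun v
  map_zero' : toFun 0 = 0
  leftContinuous' : ∀ t : ℝ, 0 < t → Tendsto toFun (nhdsWithin t (Set.Iio t)) (nhds (toFun t))
  continuousAtZero' : Tendsto toFun (nhds 0) (nhds 0)
  tendsto_top' : Tendsto toFun atTop (nhds ⊤)

/-- The Cesàro mean `σx(n) = (1/n) ∑_{j=1}^n |x j|` (with `0`-based indexing). -/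
noncomputable def cesaroMean (x : ℕ → ℝ) (n : ℕ) : ℝ :=
  (∑ j ∈ Finset.range (n + 1), |x j|) / (n + 1)

/-- The modular `ρ_φ(x) = ∑_i φ(σx(i))`. -/
noncomputable def rho (φ : OrliczFunction) (x : ℕ → ℝ) : ℝ≥0∞ :=
  ∑' n : ℕ, φ.toFun (cesaroMean x n)

/-- The Cesàro–Orlicz sequence space `ces_φ`. -/
def cesOrlicz (φ : OrliczFunction) : Set (ℕ → ℝ) :=
  {x | ∃ lam : ℝ, 0 < lam ∧ rho φ (fun i => lam * x i) < ⊤}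

/-- The Luxemburg norm `‖x‖_φ = inf {λ > 0 : ρ_φ(x/λ) ≤ 1}`. -/
noncomputable def luxNorm (φ : OrliczFunction) (x : ℕ → ℝ) : ℝ :=
  sInf {lam : ℝ | 0 < lam ∧ rho φ (fun i => x i / lam) ≤ 1}

/-- The subspace `A_φ` of `ces_φ`. -/
def Aphi (φ : OrliczFunction) : Set (ℕ → ℝ) :=
  {x | x ∈ cesOrlicz φ ∧ ∀ k : ℝ, 0 < k → ∃ nk : ℕ,
    ∑' n : ℕ, φ.toFun ((k / ((nk + n + 1 : ℕ) : ℝ)) * ∑ i ∈ Finset.range (nk + n + 1), |x i|) < ⊤}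

/-- `∃ n₁, ∑_{n=n₁}^∞ φ(1/n) < ∞`. -/
def TailFinite (φ : OrliczFunction) : Prop :=
  ∃ n₁ : ℕ, ∑' n : ℕ, φ.toFun (((n₁ + n + 1 : ℕ) : ℝ)⁻¹) < ⊤

/-- The `Δ₂`-condition at zero. -/
def Delta2Zero (φ : OrliczFunction) : Prop :=
  ∃ K : ℝ, 0 < K ∧ ∃ a : ℝ, 0 < a ∧ 0 < φ.toFun a ∧
    ∀ u : ℝ, 0 ≤ u → u ≤ a → φ.toFun (2 * u) ≤ ENNReal.ofReal K * φ.toFun u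

/-- `φ` takes only finite values. -/
def FiniteValued (φ : OrliczFunction) : Prop := ∀ u : ℝ, φ.toFun u ≠ ⊤

namespace OrliczFunction

lemma scale_le (φ : OrliczFunction) {t : ℝ} (u : ℝ) (h0 : 0 ≤ t) (h1 : t ≤ 1) :
    φ.toFun (t * u) ≤ ENNReal.ofReal t * φ.toFun u := by
  have h := φ.convex' u 0 t h0 h1
  simpa [φ.map_zero'] using h

lemma mono (φ : OrliczFunction) {u v : ℝ} (hu : 0 ≤ u) (huv : u ≤ v) :
    φ.toFun u ≤ φ.toFun v := by
  rcases eq_or_lt_of_le (hu.trans huv) with h | hv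
  · have hu0 : u = 0 := le_antisymm (huv.trans h.symm.le) hu
    rw [hu0, ← h]
  · have ht0 : 0 ≤ u / v := div_nonneg hu hv.le
    have ht1 : u / v ≤ 1 := (div_le_one hv).2 huv
    have h2 := φ.scale_le v ht0 ht1
    rw [div_mul_cancel₀ _ hv.ne'] at h2
    exact h2.trans (mul_le_of_le_one_left zero_le (ENNReal.ofReal_le_one.2 ht1))

lemma interp (φ : OrliczFunction) {lam : ℝ} (u : ℝ) (h1 : 1 ≤ lam) (h2 : lam ≤ 2) :
    φ.toFun (lam * u) ≤ φ.toFun u + ENNReal.ofReal (lam - 1) * φ.toFun (2 * u) := by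
  have h := φ.convex' u (2 * u) (2 - lam) (by linarith) (by linarith)
  have heq : (2 - lam) * u + (1 - (2 - lam)) * (2 * u) = lam * u := by ring
  rw [heq] at h
  have h3 : (1 : ℝ) - (2 - lam) = lam - 1 := by ring
  rw [h3] at h
  exact h.trans (add_le_add_left
    (mul_le_of_le_one_left zero_le (ENNReal.ofReal_le_one.2 (by linarith))) _)

end OrliczFunction

lemma cesaroMean_nonneg (x : ℕ → ℝ) (n : ℕ) : 0 ≤ cesaroMean x n :=
  div_nonneg (Finset.sum_nonneg fun j _ => abs_nonneg _) (by positivity)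

lemma cesaroMean_smul (c : ℝ) (hc : 0 ≤ c) (x : ℕ → ℝ) (n : ℕ) :
    cesaroMean (fun i => c * x i) n = c * cesaroMean x n := by
  unfold cesaroMean
  rw [Finset.sum_congr rfl fun j (_ : j ∈ Finset.range (n+1)) => by
      rw [abs_mul, abs_of_nonneg hc],
    ← Finset.mul_sum, mul_div_assoc]

lemma cesaroMean_div (x : ℕ → ℝ) (c : ℝ) (hc : 0 ≤ c) (n : ℕ) :
    cesaroMean (fun i => x i / c) n = cesaroMean x n / c := by
  have h : (fun i => x i / c) = fun i => c⁻¹ * x i := by funext i; rw [inv_mul_eq_div]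
  rw [h, cesaroMean_smul _ (inv_nonneg.2 hc), inv_mul_eq_div]

/-- if `φ ∈ Δ₂(0)` then for any `ε > 0` there is `δ > 0` with
`‖x‖_φ ≥ 1 + δ` whenever `ρ_φ(x) ≥ 1 + ε`. -/
theorem stmt_12 (φ : OrliczFunction) (hfin : FiniteValued φ) (hδ : Delta2Zero φ)
    (htail : TailFinite φ) :
    ∀ ε : ℝ, 0 < ε → ∃ δ : ℝ, 0 < δ ∧ ∀ x ∈ cesOrlicz φ,
      1 + ENNReal.ofReal ε ≤ rho φ x → 1 + δ ≤ luxNorm φ x := by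
  classical
  obtain ⟨K, hK, a, ha, hφa, hΔ2⟩ := hδ
  obtain ⟨b, hb1, hb0⟩ : ∃ b : ℝ, 1 < φ.toFun b ∧ 0 ≤ b := by
    have h := φ.tendsto_top'
    have h1 : ∀ᶠ u in atTop, 1 < φ.toFun u :=
      h.eventually (lt_mem_nhds (show (1:ℝ≥0∞) < ⊤ from ENNReal.one_lt_top))
    exact (h1.and (eventually_ge_atTop (0:ℝ))).exists
  set M : ℝ≥0∞ := φ.toFun (2 * b) with hM
  have hMne : M ≠ ⊤ := hfin _
  have hφa0 : φ.toFun a ≠ 0 := hφa.ne'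
  have hφaT : φ.toFun a ≠ ⊤ := hfin a
  set C : ℝ≥0∞ := ENNReal.ofReal K + M / φ.toFun a with hC
  have hCT : C ≠ ⊤ :=
    ENNReal.add_ne_top.2 ⟨ENNReal.ofReal_ne_top, (ENNReal.div_lt_top hMne hφa0).ne⟩
  intro ε hε
  set Ct : ℝ := C.toReal with hCt
  have hCt0 : 0 ≤ Ct := ENNReal.toReal_nonneg
  set δ : ℝ := min 1 (ε / (2 * (Ct + 1))) with hδdef
  have hδpos : 0 < δ := lt_min one_pos (by positivity)
  have hδ1 : δ ≤ 1 := min_le_left _ _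
  have hkeyδ : ENNReal.ofReal δ * C < ENNReal.ofReal ε := by
    have hCeq : C = ENNReal.ofReal Ct := (ENNReal.ofReal_toReal hCT).symm
    rw [hCeq, ← ENNReal.ofReal_mul hδpos.le]
    apply (ENNReal.ofReal_lt_ofReal_iff hε).2
    have h1 : δ * (Ct + 1) ≤ ε / 2 := by
      calc δ * (Ct + 1) ≤ (ε / (2 * (Ct + 1))) * (Ct + 1) :=
            mul_le_mul_of_nonneg_right (min_le_right _ _) (by linarith)
        _ = ε / 2 := by field_simp
    have h2 : δ * Ct ≤ δ * (Ct + 1) :=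
      mul_le_mul_of_nonneg_left (by linarith) hδpos.le
    linarith
  refine ⟨δ, hδpos, ?_⟩
  intro x hx hρx
  by_contra hcon
  push_neg at hcon
  -- the norm set is nonempty
  obtain ⟨lam, hlam, hR⟩ := hx
  set R : ℝ≥0∞ := rho φ (fun i => lam * x i) with hRdef
  set t : ℝ := min 1 (1 / (R.toReal + 1)) with ht
  have ht0 : 0 < t := lt_min one_pos (by positivity)
  have ht1 : t ≤ 1 := min_le_left _ _
  have hmem : ((t * lam)⁻¹) ∈ {lam : ℝ | 0 < lam ∧ rho φ (fun i => x i / lam) ≤ 1} := by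
    constructor
    · positivity
    · have hfun : (fun i => x i / (t * lam)⁻¹) = (fun i => (t * lam) * x i) := by
        funext i; rw [div_eq_mul_inv, inv_inv]; ring
      rw [hfun]
      have hstep : rho φ (fun i => (t * lam) * x i) ≤ ENNReal.ofReal t * R := by
        rw [hRdef]
        unfold rho
        rw [← ENNReal.tsum_mul_left]
        refine ENNReal.tsum_le_tsum fun n => ?_
        have hfun2 : (fun i => (t * lam) * x i) = (fun i => t * (lam * x i)) := by
          funext i; ring
        rw [hfun2, cesaroMean_smul t ht0.le]
        exact φ.scale_le _ ht0.le ht1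
      refine hstep.trans ?_
      have heq : ENNReal.ofReal t * R = ENNReal.ofReal (t * R.toReal) := by
        rw [ENNReal.ofReal_mul ht0.le, ENNReal.ofReal_toReal hR.ne]
      calc ENNReal.ofReal t * R = ENNReal.ofReal (t * R.toReal) := heq
        _ ≤ 1 := by
            rw [← ENNReal.ofReal_one]
            apply ENNReal.ofReal_le_ofReal
            have h1 : t ≤ 1 / (R.toReal + 1) := min_le_right _ _
            have h2 : (0:ℝ) ≤ R.toReal := ENNReal.toReal_nonneg
            calc t * R.toReal ≤ (1 / (R.toReal + 1)) * R.toReal :=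
                  mul_le_mul_of_nonneg_right h1 h2
              _ ≤ 1 := by
                  rw [div_mul_eq_mul_div, one_mul]
                  exact div_le_one_of_le₀ (by linarith) (by linarith)
  have hlt : sInf {lam : ℝ | 0 < lam ∧ rho φ (fun i => x i / lam) ≤ 1} < 1 + δ := hcon
  obtain ⟨lam₀, hlam₀mem, hlam₀lt⟩ := exists_lt_of_csInf_lt ⟨_, hmem⟩ hlt
  obtain ⟨hlam₀pos, hρ₀⟩ := hlam₀mem
  have hδ0 : (0:ℝ) < 1 + δ := by linarith
  set y : ℕ → ℝ := fun i => x i / (1 + δ) with hy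
  have hyρ : rho φ y ≤ 1 := by
    refine le_trans ?_ hρ₀
    refine ENNReal.tsum_le_tsum fun n => ?_
    apply φ.mono (cesaroMean_nonneg _ _)
    rw [hy]
    rw [cesaroMean_div x (1 + δ) hδ0.le, cesaroMean_div x lam₀ hlam₀pos.le]
    gcongr <;>
      first
        | exact cesaroMean_nonneg _ _
        | exact hlam₀pos
        | exact hlam₀lt.le
  have hterm : ∀ n, φ.toFun (cesaroMean y n) ≤ 1 :=
    fun n => (ENNReal.le_tsum n).trans hyρ
  have hub : ∀ n, cesaroMean y n ≤ b := by
    intro n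
    by_contra hgt
    push_neg at hgt
    exact absurd ((φ.mono hb0 hgt.le).trans (hterm n)) (not_le.2 hb1)
  have hkey : ∀ n, φ.toFun (2 * cesaroMean y n) ≤ C * φ.toFun (cesaroMean y n) := by
    intro n
    set u := cesaroMean y n with hu
    have hu0 : 0 ≤ u := cesaroMean_nonneg _ _
    by_cases hua : u ≤ a
    · exact (hΔ2 u hu0 hua).trans (mul_le_mul_left le_self_add _)
    · push_neg at hua
      have h2u : φ.toFun (2 * u) ≤ M := φ.mono (by linarith) (by linarith [hub n])
      have hMle : M ≤ (M / φ.toFun a) * φ.toFun u :=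
        calc M = M / φ.toFun a * φ.toFun a := (ENNReal.div_mul_cancel hφa0 hφaT).symm
          _ ≤ M / φ.toFun a * φ.toFun u := mul_le_mul_right (φ.mono ha.le hua.le) _
      exact h2u.trans (hMle.trans (mul_le_mul_left le_add_self _))
  have hx_eq : ∀ n, cesaroMean x n = (1 + δ) * cesaroMean y n := by
    intro n
    rw [hy, cesaroMean_div x (1 + δ) hδ0.le]
    field_simp
  have hfinal : rho φ x ≤ 1 + ENNReal.ofReal δ * C := by
    show ∑' n, φ.toFun (cesaroMean x n) ≤ 1 + ENNReal.ofReal δ * C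
    calc ∑' n, φ.toFun (cesaroMean x n)
        ≤ ∑' n, (φ.toFun (cesaroMean y n) +
            (ENNReal.ofReal δ * C) * φ.toFun (cesaroMean y n)) := by
          refine ENNReal.tsum_le_tsum fun n => ?_
          rw [hx_eq n]
          refine (φ.interp _ (by linarith) (by linarith)).trans ?_
          rw [show (1 + δ) - 1 = δ by ring]
          rw [mul_assoc]
          exact add_le_add_right (mul_le_mul_right (hkey n) _) _
      _ = (∑' n, φ.toFun (cesaroMean y n)) +
            (ENNReal.ofReal δ * C) * (∑' n, φ.toFun (cesaroMean y n)) := by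
          rw [ENNReal.tsum_add, ENNReal.tsum_mul_left]
      _ ≤ 1 + ENNReal.ofReal δ * C := by
          refine add_le_add hyρ ?_
          calc (ENNReal.ofReal δ * C) * (∑' n, φ.toFun (cesaroMean y n))
              ≤ (ENNReal.ofReal δ * C) * 1 := mul_le_mul_right hyρ _
            _ = ENNReal.ofReal δ * C := mul_one _
  have hchain : (1:ℝ≥0∞) + ENNReal.ofReal ε ≤ 1 + ENNReal.ofReal δ * C := hρx.trans hfinal
  have h2 : (1:ℝ≥0∞) + ENNReal.ofReal δ * C < 1 + ENNReal.ofReal ε :=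
    ENNReal.add_lt_add_left ENNReal.one_ne_top hkeyδ
  exact lt_irrefl _ (hchain.trans_lt h2)
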